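/- Let D be a digraph of order n ≥ 3 containing a cycle C_m of length m with 2 ≤ m ≤ n−1, and let x be a vertex not on this cycle. If d(x, C_m) ≥ m+1 (the number of arcs between x and vertices of C_m is at least m+1), then D contains a cycle of length k for every k with 2 ≤ k ≤ m+1. -/

import Mathlib

open Finset

/-- A list of distinct vertices whose consecutive members are joined by arcs. -/
def IsPathList {V : Type*} (A : V → V → Prop) (p : List V) : Prop :=
  p.Nodup ∧ p.Chain' A

/-- A directed cycle: at least two distinct vertices, consecutive arcs, and an arc
from the last vertex back to the first. -/
def IsCycleList {V : Type*} (A : V → V → Prop) (c : List V) : Prop :=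
  2 ≤ c.length ∧ c.Nodup ∧ c.Chain' A ∧ ∀ h : c ≠ [], A (c.getLast h) (c.head h)

/-- A Hamiltonian bypass: a Hamiltonian path `v₁ v₂ … vₙ` together with the arc `v₁ vₙ`. -/
def HasHamBypass {V : Type*} (A : V → V → Prop) : Prop :=
  ∃ l : List V, l.Nodup ∧ (∀ v, v ∈ l) ∧ l.Chain' A ∧
    ∀ h : l ≠ [], A (l.head h) (l.getLast h)

/-- A Hamiltonian cycle. -/
def HasHamCycle {V : Type*} (A : V → V → Prop) : Prop :=
  ∃ c : List V, IsCycleList A c ∧ ∀ v, v ∈ c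

/-- out-degree of `x` towards a set `S`. -/
def outDegOn {V : Type*} [DecidableEq V] (A : V → V → Prop) [DecidableRel A]
    (x : V) (S : Finset V) : ℕ := (S.filter fun y => A x y).card

/-- in-degree of `x` from a set `S`. -/
def inDegOn {V : Type*} [DecidableEq V] (A : V → V → Prop) [DecidableRel A]
    (x : V) (S : Finset V) : ℕ := (S.filter fun y => A y x).card

/-- degree of `x` with respect to a set `S` (arcs in both directions). -/
def degOn {V : Type*} [DecidableEq V] (A : V → V → Prop) [DecidableRel A]
    (x : V) (S : Finset V) : ℕ := outDegOn A x S + inDegOn A x S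

/-- out-degree of `x`. -/
def outDeg {V : Type*} [Fintype V] [DecidableEq V] (A : V → V → Prop) [DecidableRel A]
    (x : V) : ℕ := outDegOn A x Finset.univ

/-- in-degree of `x`. -/
def inDeg {V : Type*} [Fintype V] [DecidableEq V] (A : V → V → Prop) [DecidableRel A]
    (x : V) : ℕ := inDegOn A x Finset.univ

/-- degree of `x`. -/
def deg {V : Type*} [Fintype V] [DecidableEq V] (A : V → V → Prop) [DecidableRel A]
    (x : V) : ℕ := outDeg A x + inDeg A x

/-- The condition `A_k` of Manoussakis: for every triple of distinct vertices `x, y, z`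
with `x` and `y` non-adjacent, if `xz` is not an arc then
`d(x)+d(y)+d⁺(x)+d⁻(z) ≥ 3n-2+k`, and if `zx` is not an arc then
`d(x)+d(y)+d⁻(x)+d⁺(z) ≥ 3n-2+k`. -/
def CondA {V : Type*} [Fintype V] [DecidableEq V] (A : V → V → Prop) [DecidableRel A]
    (k : ℤ) : Prop :=
  ∀ x y z : V, x ≠ y → z ≠ x → z ≠ y → ¬A x y → ¬A y x →
    (¬A x z → (deg A x + deg A y + outDeg A x + inDeg A z : ℤ) ≥
      3 * (Fintype.card V : ℤ) - 2 + k) ∧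
    (¬A z x → (deg A x + deg A y + inDeg A x + outDeg A z : ℤ) ≥
      3 * (Fintype.card V : ℤ) - 2 + k)


/-- Lemma 1. -/
theorem stmt0 {V : Type*} [Fintype V] [DecidableEq V] (A : V → V → Prop) [DecidableRel A]
    (hirr : ∀ v, ¬A v v) (hn : 3 ≤ Fintype.card V)
    (c : List V) (m : ℕ) (hc : IsCycleList A c) (hmlen : c.length = m)
    (hm2 : 2 ≤ m) (hm3 : m ≤ Fintype.card V - 1)
    (x : V) (hx : x ∉ c)
    (hd : m + 1 ≤ degOn A x c.toFinset) :
    ∀ k, 2 ≤ k → k ≤ m + 1 → ∃ c' : List V, IsCycleList A c' ∧ c'.length = k := by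
  obtain ⟨hlen2, hnodup, hchain, hwrap⟩ := hc
  subst hmlen
  intro k hk2 hkm
  obtain ⟨t, rfl⟩ : ∃ t, k = t + 2 := ⟨k - 2, by omega⟩
  have ht1 : t + 1 ≤ c.length := by omega
  have hne : c ≠ [] := by rintro rfl; simp at hlen2
  have npos : 0 < c.length := by omega
  have hmod : ∀ a : ℕ, a % c.length < c.length := fun a => Nat.mod_lt _ npos
  have hget_inj : Function.Injective c.get := List.nodup_iff_injective_get.mp hnodup
  haveI : NeZero c.length := ⟨by omega⟩
  -- cyclic successor arcs
  have harc : ∀ a : ℕ, A (c.get ⟨a % c.length, hmod a⟩) (c.get ⟨(a+1) % c.length, hmod _⟩) := by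
    intro a
    have hma : a % c.length < c.length := hmod a
    have e0 : (a+1) % c.length = (a % c.length + 1) % c.length := by
      conv_lhs => rw [Nat.add_mod]
      rw [Nat.mod_eq_of_lt (show 1 < c.length by omega)]
    rcases Nat.lt_or_ge (a % c.length + 1) c.length with h | h
    · have e2 : (⟨(a+1) % c.length, hmod _⟩ : Fin c.length) = ⟨a % c.length + 1, h⟩ := by
        apply Fin.ext
        show (a+1) % c.length = a % c.length + 1
        rw [e0]; exact Nat.mod_eq_of_lt h
      rw [e2]
      exact List.isChain_iff_getElem.mp hchain (a % c.length) (by omega)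
    · have e2 : (⟨(a+1) % c.length, hmod _⟩ : Fin c.length) = ⟨0, npos⟩ := by
        apply Fin.ext
        show (a+1) % c.length = 0
        rw [e0, show a % c.length + 1 = c.length by omega, Nat.mod_self]
      have e3 : (⟨a % c.length, hmod a⟩ : Fin c.length) = ⟨c.length - 1, by omega⟩ := by
        apply Fin.ext
        show a % c.length = c.length - 1
        omega
      rw [e2, e3]
      have hl : c.get ⟨c.length - 1, by omega⟩ = c.getLast hne :=
        List.get_length_sub_one _
      have hh : c.get ⟨0, npos⟩ = c.head hne := by
        rw [List.head_eq_getElem_zero]; rfl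
      rw [hl, hh]
      exact hwrap hne
  -- counting
  have hfilter : ∀ (p : V → Prop) [DecidablePred p],
      (c.toFinset.filter p).card
        = (Finset.univ.filter fun j : Fin c.length => p (c.get j)).card := by
    intro p _
    rw [← Finset.card_image_of_injective
      (Finset.univ.filter fun j : Fin c.length => p (c.get j)) hget_inj]
    congr 1
    ext v
    simp only [Finset.mem_image, Finset.mem_filter, Finset.mem_univ, true_and,
      List.mem_toFinset]
    constructor
    · rintro ⟨hv, hp⟩
      obtain ⟨j, rfl⟩ := List.mem_iff_get.mp hv
      exact ⟨j, hp, rfl⟩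
    · rintro ⟨j, hp, rfl⟩
      exact ⟨List.get_mem _ _, hp⟩
  set d' : Fin c.length := ⟨t % c.length, hmod t⟩ with hd'
  have key : ∃ i : Fin c.length, A x (c.get i) ∧ A (c.get (i + d')) x := by
    by_contra hcon
    push_neg at hcon
    have h2 : (Finset.univ.filter fun j : Fin c.length => A (c.get j) x).card
        = (Finset.univ.filter fun j : Fin c.length => A (c.get (j + d')) x).card := by
      rw [Finset.card_filter, Finset.card_filter]
      exact (Fintype.sum_equiv (Equiv.addRight d') _ _ (fun j => rfl)).symm
    have hle : degOn A x c.toFinset ≤ c.length := by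
      rw [degOn, outDegOn, inDegOn, hfilter, hfilter, h2,
        Finset.card_filter, Finset.card_filter, ← Finset.sum_add_distrib]
      calc ∑ j : Fin c.length,
            ((if A x (c.get j) then 1 else 0) + if A (c.get (j + d')) x then 1 else 0)
          ≤ ∑ _j : Fin c.length, 1 := by
            refine Finset.sum_le_sum fun j _ => ?_
            split_ifs with u v
            · exact absurd v (hcon j u)
            all_goals omega
        _ = c.length := by simp
    omega
  obtain ⟨i, hxi, hix⟩ := key
  set f : ℕ → V := fun j => c.get ⟨(i.val + j) % c.length, hmod _⟩ with hf
  set L : List V := (List.range (t+1)).map f with hL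
  have hLlen : L.length = t + 1 := by simp [hL]
  have hLne : L ≠ [] := by
    intro h; rw [h] at hLlen; simp at hLlen
  have hmemL : ∀ v ∈ L, v ∈ c := by
    intro v hv
    simp only [hL, List.mem_map] at hv
    obtain ⟨j, _, rfl⟩ := hv
    exact List.get_mem _ _
  refine ⟨x :: L, ⟨?_, ?_, ?_, ?_⟩, ?_⟩
  · simp [hLlen]
  · refine List.nodup_cons.mpr ⟨fun hmem => hx (hmemL x hmem), ?_⟩
    refine List.Nodup.map_on ?_ List.nodup_range
    intro a ha b hb hab
    simp only [List.mem_range] at ha hb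
    have h1 : (i.val + a) % c.length = (i.val + b) % c.length := by
      have := hget_inj hab
      exact congrArg Fin.val this
    have h2 : a ≡ b [MOD c.length] := Nat.ModEq.add_left_cancel' i.val h1
    rwa [Nat.ModEq, Nat.mod_eq_of_lt (by omega), Nat.mod_eq_of_lt (by omega)] at h2
  · refine List.isChain_cons.mpr ⟨?_, ?_⟩
    · intro y hy
      have hh : L.head? = some (f 0) := by
        rw [hL, List.range_succ_eq_map]
        rfl
      rw [hh, Option.mem_some_iff] at hy
      subst hy
      have : (⟨(i.val + 0) % c.length, hmod _⟩ : Fin c.length) = i :=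
        Fin.ext (by simpa using Nat.mod_eq_of_lt i.isLt)
      show A x (c.get ⟨(i.val + 0) % c.length, hmod _⟩)
      rw [this]
      exact hxi
    · rw [hL]
      refine (List.isChain_map f).mpr ?_
      refine (List.isChain_range_succ _ t).mpr fun j hj => ?_
      exact harc (i.val + j)
  · intro h
    have e1 : (x :: L).getLast h = L.getLast hLne := List.getLast_cons hLne
    have e2 : L.getLast hLne = f t := by
      rw [List.getLast_eq_getElem]
      simp [hL]
    have e3 : (x :: L).head h = x := rfl
    rw [e1, e2, e3]
    have : (⟨(i.val + t) % c.length, hmod _⟩ : Fin c.length) = i + d' := by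
      refine Fin.ext ?_
      rw [Fin.val_add]
      exact (((Nat.mod_modEq t c.length).add_left i.val)).symm
    show A (c.get ⟨(i.val + t) % c.length, hmod _⟩) x
    rw [this]
    exact hix
  · simp [hLlen]
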